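/- For every integer n ≥ 2: tot_n(122) = tot_{n−1}(12), tot_n(211) = tot_{n−1}(21), and tot_n(111) = tot_{n−1}(11). -/

import Mathlib

open scoped BigOperators

/-- `w` is a Catalan word: it is nonempty, starts with `1`, and each subsequent
letter lies between `1` and the previous letter plus one. -/
def IsCatalan (w : List ℕ) : Prop :=
  w ≠ [] ∧ w.getD 0 0 = 1 ∧
    ∀ i, i + 1 < w.length →
      1 ≤ w.getD (i + 1) 0 ∧ w.getD (i + 1) 0 ≤ w.getD i 0 + 1

/-- `i` is the starting index of a maximal weakly increasing run of `w`. -/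
def RunStart (w : List ℕ) (i : ℕ) : Prop :=
  i < w.length ∧ (i = 0 ∨ w.getD i 0 < w.getD (i - 1) 0)

/-- `w` is flattened: the first letters of its increasing runs, read left to
right, form a weakly nondecreasing sequence. -/
def IsFlattened (w : List ℕ) : Prop :=
  ∀ i j, RunStart w i → RunStart w j → i ≤ j → w.getD i 0 ≤ w.getD j 0

/-- The set of flattened Catalan words of length `n`. -/
def FlatCat (n : ℕ) : Set (List ℕ) :=
  {w | w.length = n ∧ IsCatalan w ∧ IsFlattened w}

/-- `i` is the starting index of an occurrence of the consecutive pattern `τ`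
in the word `w`, i.e. the factor of `w` of length `|τ|` starting at `i` is
order-isomorphic to `τ`. -/
def OccAt (τ w : List ℕ) (i : ℕ) : Prop :=
  i + τ.length ≤ w.length ∧
    ∀ s < τ.length, ∀ t < τ.length,
      (w.getD (i + s) 0 < w.getD (i + t) 0 ↔ τ.getD s 0 < τ.getD t 0)

/-- The number of occurrences of the consecutive pattern `τ` in `w`. -/
noncomputable def numOcc (τ w : List ℕ) : ℕ :=
  Set.ncard {i | OccAt τ w i}

/-- The number of distinct letters in the terminal (rightmost) increasing run
of `w`, i.e. in the longest weakly increasing suffix of `w`. -/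
noncomputable def trun (w : List ℕ) : ℕ :=
  ((w.drop (sInf {i | List.Chain' (· ≤ ·) (w.drop i)})).toFinset).card

/-- The total number of occurrences of the consecutive pattern `τ` over all
flattened Catalan words of length `n`. -/
noncomputable def tot (n : ℕ) (τ : List ℕ) : ℕ :=
  ∑ᶠ w ∈ FlatCat n, numOcc τ w

open List

-- basic getD lemmas for insertIdx
lemma getD_insert_lt (w' : List ℕ) (i : ℕ) (v : ℕ) (h2 : i + 2 ≤ w'.length)
    (j : ℕ) (hj : j ≤ i + 1) :
    (w'.insertIdx (i+2) v).getD j 0 = w'.getD j 0 := by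
  have hjl : j < w'.length := by omega
  have hjl' : j < (w'.insertIdx (i+2) v).length := by
    rw [List.length_insertIdx_of_le_length h2]; omega
  rw [List.getD_eq_getElem _ _ hjl', List.getD_eq_getElem _ _ hjl]
  exact List.getElem_insertIdx_of_lt (by omega) hjl'

lemma getD_insert_self (w' : List ℕ) (i : ℕ) (v : ℕ) (h2 : i + 2 ≤ w'.length) :
    (w'.insertIdx (i+2) v).getD (i+2) 0 = v := by
  have h : i + 2 < (w'.insertIdx (i+2) v).length := by
    rw [List.length_insertIdx_of_le_length h2]; omega
  rw [List.getD_eq_getElem _ _ h]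
  exact List.getElem_insertIdx_self h

lemma getD_insert_ge (w' : List ℕ) (i : ℕ) (v : ℕ) (h2 : i + 2 ≤ w'.length)
    (j : ℕ) (hj : i + 2 ≤ j) :
    (w'.insertIdx (i+2) v).getD (j+1) 0 = w'.getD j 0 := by
  by_cases hl : j < w'.length
  · have hl' : j + 1 < (w'.insertIdx (i+2) v).length := by
      rw [List.length_insertIdx_of_le_length h2]; omega
    rw [List.getD_eq_getElem _ _ hl', List.getD_eq_getElem _ _ hl]
    have hk : j = (i+2) + (j - (i+2)) := by omega
    have := List.getElem_insertIdx_of_gt (l := w') (x := v) (i := i+2) (j := j+1) (by omega)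
      hl'
    convert this using 2 <;> omega
  · rw [List.getD_eq_default w' _ (by omega), List.getD_eq_default _ _
      (by rw [List.length_insertIdx_of_le_length h2]; omega)]

-- derived: w'.getD j = w.getD (j+1) for j ≥ i+1, where inserted value is w'.getD (i+1) 0
lemma getD_insert_ge' (w' : List ℕ) (i : ℕ) (h2 : i + 2 ≤ w'.length)
    (j : ℕ) (hj : i + 1 ≤ j) :
    w'.getD j 0 = (w'.insertIdx (i+2) (w'.getD (i+1) 0)).getD (j+1) 0 := by
  rcases Nat.eq_or_lt_of_le hj with h | h
  · rw [← h, getD_insert_self w' i _ h2]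
  · rw [getD_insert_ge w' i _ h2 j (by omega)]

lemma getD_insert_ge'' (w' : List ℕ) (i : ℕ) (h2 : i + 2 ≤ w'.length)
    (j : ℕ) (hj : i + 2 ≤ j) :
    (w'.insertIdx (i+2) (w'.getD (i+1) 0)).getD j 0 = w'.getD (j-1) 0 := by
  have : j = (j-1) + 1 := by omega
  conv_lhs => rw [this]
  rw [← getD_insert_ge' w' i h2 (j-1) (by omega)]

lemma length_insert (w' : List ℕ) (i : ℕ) (v : ℕ) (h2 : i + 2 ≤ w'.length) :
    (w'.insertIdx (i+2) v).length = w'.length + 1 :=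
  List.length_insertIdx_of_le_length h2 _

lemma occ2_iff (a b : ℕ) (u : List ℕ) (i : ℕ) :
    OccAt [a, b] u i ↔ i + 2 ≤ u.length ∧
      (u.getD i 0 < u.getD (i+1) 0 ↔ a < b) ∧
      (u.getD (i+1) 0 < u.getD i 0 ↔ b < a) := by
  constructor
  · rintro ⟨hl, h⟩
    refine ⟨by simpa using hl, ?_, ?_⟩
    · have := h 0 (by norm_num) 1 (by norm_num); simpa using this
    · have := h 1 (by norm_num) 0 (by norm_num); simpa using this
  · rintro ⟨hl, h1, h2⟩
    refine ⟨by simpa using hl, ?_⟩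
    intro s hs t ht
    simp only [List.length_cons, List.length_nil] at hs ht
    interval_cases s <;> interval_cases t <;>
      simp_all [List.getD_cons_zero, List.getD_cons_succ]

lemma occ3_iff (a b : ℕ) (u : List ℕ) (i : ℕ) :
    OccAt [a, b, b] u i ↔ i + 3 ≤ u.length ∧
      u.getD (i+1) 0 = u.getD (i+2) 0 ∧
      (u.getD i 0 < u.getD (i+1) 0 ↔ a < b) ∧
      (u.getD (i+1) 0 < u.getD i 0 ↔ b < a) := by
  constructor
  · rintro ⟨hl, h⟩
    refine ⟨by simpa using hl, ?_, ?_, ?_⟩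
    · have h12 := h 1 (by norm_num) 2 (by norm_num)
      have h21 := h 2 (by norm_num) 1 (by norm_num)
      simp only [List.getD_cons_zero, List.getD_cons_succ, lt_irrefl, iff_false] at h12 h21
      omega
    · have := h 0 (by norm_num) 1 (by norm_num); simpa using this
    · have := h 1 (by norm_num) 0 (by norm_num); simpa using this
  · rintro ⟨hl, heq, h1, h2⟩
    refine ⟨by simpa using hl, ?_⟩
    intro s hs t ht
    simp only [List.length_cons, List.length_nil] at hs ht
    interval_cases s <;> interval_cases t <;>
      simp_all [List.getD_cons_zero, List.getD_cons_succ]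

lemma catalan_insert_iff (w' : List ℕ) (i : ℕ) (h2 : i + 2 ≤ w'.length) :
    IsCatalan (w'.insertIdx (i+2) (w'.getD (i+1) 0)) ↔ IsCatalan w' := by
  set v := w'.getD (i+1) 0 with hv
  constructor
  · rintro ⟨hne, h0, hstep⟩
    refine ⟨?_, ?_, ?_⟩
    · intro h; rw [h] at h2; simp at h2
    · rw [← getD_insert_lt w' i v h2 0 (by omega)]; exact h0
    · intro j hj
      by_cases hc : j + 1 ≤ i + 1
      · rw [← getD_insert_lt w' i v h2 (j+1) hc, ← getD_insert_lt w' i v h2 j (by omega)]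
        exact hstep j (by rw [length_insert _ _ _ h2]; omega)
      · rw [getD_insert_ge' w' i h2 (j+1) (by omega), getD_insert_ge' w' i h2 j (by omega)]
        exact hstep (j+1) (by rw [length_insert _ _ _ h2]; omega)
  · rintro ⟨hne, h0, hstep⟩
    refine ⟨?_, ?_, ?_⟩
    · intro h
      have := congrArg List.length h
      rw [length_insert _ _ _ h2] at this; simp at this
    · rw [getD_insert_lt w' i v h2 0 (by omega)]; exact h0
    · intro j hj
      rw [length_insert _ _ _ h2] at hj
      by_cases hc : j + 1 ≤ i + 1
      · rw [getD_insert_lt w' i v h2 (j+1) hc, getD_insert_lt w' i v h2 j (by omega)]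
        exact hstep j (by omega)
      · by_cases hc2 : j + 1 = i + 2
        · have e1 : (w'.insertIdx (i+2) v).getD (j+1) 0 = v := by
            rw [hc2]; exact getD_insert_self w' i v h2
          have e2 : (w'.insertIdx (i+2) v).getD j 0 = v := by
            have : j = i + 1 := by omega
            rw [this, getD_insert_lt w' i v h2 (i+1) (by omega)]
          rw [e1, e2]
          have := hstep i (by omega)
          constructor
          · exact this.1
          · omega
        · have hj3 : i + 3 ≤ j + 1 := by omega
          rw [getD_insert_ge'' w' i h2 (j+1) (by omega), getD_insert_ge'' w' i h2 j (by omega)]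
          have := hstep (j-1) (by omega)
          have e : j - 1 + 1 = j := by omega
          rw [e] at this
          have e2 : j + 1 - 1 = j := by omega
          rw [e2]
          exact this

lemma runStart_low (w' : List ℕ) (i : ℕ) (h2 : i + 2 ≤ w'.length) (j : ℕ) (hj : j ≤ i + 1) :
    RunStart (w'.insertIdx (i+2) (w'.getD (i+1) 0)) j ↔ RunStart w' j := by
  set v := w'.getD (i+1) 0 with hv
  unfold RunStart
  rw [length_insert _ _ _ h2, getD_insert_lt w' i v h2 j hj,
    getD_insert_lt w' i v h2 (j-1) (by omega)]
  constructor <;> rintro ⟨hl, h⟩ <;> exact ⟨by omega, h⟩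

lemma runStart_mid (w' : List ℕ) (i : ℕ) (h2 : i + 2 ≤ w'.length) :
    ¬ RunStart (w'.insertIdx (i+2) (w'.getD (i+1) 0)) (i+2) := by
  set v := w'.getD (i+1) 0 with hv
  rintro ⟨hl, h⟩
  rcases h with h | h
  · omega
  · rw [getD_insert_self w' i v h2] at h
    have e : i + 2 - 1 = i + 1 := by omega
    rw [e, getD_insert_lt w' i v h2 (i+1) (by omega)] at h
    exact lt_irrefl _ h

lemma runStart_high (w' : List ℕ) (i : ℕ) (h2 : i + 2 ≤ w'.length) (j : ℕ) (hj : i + 3 ≤ j) :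
    RunStart (w'.insertIdx (i+2) (w'.getD (i+1) 0)) j ↔ RunStart w' (j-1) := by
  set v := w'.getD (i+1) 0 with hv
  unfold RunStart
  rw [length_insert _ _ _ h2, getD_insert_ge'' w' i h2 j (by omega),
    getD_insert_ge'' w' i h2 (j-1) (by omega)]
  have e : j - 1 - 1 = j - 1 - 1 := rfl
  constructor
  · rintro ⟨hl, h⟩
    refine ⟨by omega, Or.inr ?_⟩
    rcases h with h | h
    · omega
    · exact h
  · rintro ⟨hl, h⟩
    refine ⟨by omega, Or.inr ?_⟩
    rcases h with h | h
    · omega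
    · exact h

lemma flattened_insert_iff (w' : List ℕ) (i : ℕ) (h2 : i + 2 ≤ w'.length) :
    IsFlattened (w'.insertIdx (i+2) (w'.getD (i+1) 0)) ↔ IsFlattened w' := by
  set v := w'.getD (i+1) 0 with hv
  constructor
  · intro hf j k hj hk hjk
    by_cases cj : j ≤ i + 1 <;> by_cases ck : k ≤ i + 1
    · have := hf j k ((runStart_low w' i h2 j cj).2 hj) ((runStart_low w' i h2 k ck).2 hk) hjk
      rwa [getD_insert_lt w' i v h2 j cj, getD_insert_lt w' i v h2 k ck] at this
    · -- j small, k ≥ i+2, lift k to k+1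
      have hk' : RunStart (w'.insertIdx (i+2) v) (k+1) := by
        rw [runStart_high w' i h2 (k+1) (by omega)]
        simpa using hk
      have := hf j (k+1) ((runStart_low w' i h2 j cj).2 hj) hk' (by omega)
      rwa [getD_insert_lt w' i v h2 j cj, ← getD_insert_ge' w' i h2 k (by omega)] at this
    · omega
    · have hj' : RunStart (w'.insertIdx (i+2) v) (j+1) := by
        rw [runStart_high w' i h2 (j+1) (by omega)]
        simpa using hj
      have hk' : RunStart (w'.insertIdx (i+2) v) (k+1) := by
        rw [runStart_high w' i h2 (k+1) (by omega)]
        simpa using hk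
      have := hf (j+1) (k+1) hj' hk' (by omega)
      rwa [← getD_insert_ge' w' i h2 j (by omega), ← getD_insert_ge' w' i h2 k (by omega)] at this
  · intro hf j k hj hk hjk
    have hjm : j ≠ i + 2 := by rintro rfl; exact runStart_mid w' i h2 hj
    have hkm : k ≠ i + 2 := by rintro rfl; exact runStart_mid w' i h2 hk
    by_cases cj : j ≤ i + 1 <;> by_cases ck : k ≤ i + 1
    · rw [getD_insert_lt w' i v h2 j cj, getD_insert_lt w' i v h2 k ck]
      exact hf j k ((runStart_low w' i h2 j cj).1 hj) ((runStart_low w' i h2 k ck).1 hk) hjk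
    · have ck3 : i + 3 ≤ k := by omega
      rw [getD_insert_lt w' i v h2 j cj, getD_insert_ge'' w' i h2 k (by omega)]
      exact hf j (k-1) ((runStart_low w' i h2 j cj).1 hj)
        ((runStart_high w' i h2 k ck3).1 hk) (by omega)
    · omega
    · have cj3 : i + 3 ≤ j := by omega
      have ck3 : i + 3 ≤ k := by omega
      rw [getD_insert_ge'' w' i h2 j (by omega), getD_insert_ge'' w' i h2 k (by omega)]
      exact hf (j-1) (k-1) ((runStart_high w' i h2 j cj3).1 hj)
        ((runStart_high w' i h2 k ck3).1 hk) (by omega)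

lemma occ_insert_iff (w' : List ℕ) (i : ℕ) (h2 : i + 2 ≤ w'.length) (a b : ℕ) :
    OccAt [a, b, b] (w'.insertIdx (i+2) (w'.getD (i+1) 0)) i ↔ OccAt [a, b] w' i := by
  set v := w'.getD (i+1) 0 with hv
  rw [occ3_iff, occ2_iff, length_insert _ _ _ h2,
    getD_insert_lt w' i v h2 i (by omega), getD_insert_lt w' i v h2 (i+1) (by omega),
    getD_insert_self w' i v h2]
  constructor
  · rintro ⟨hl, _, h1, h2'⟩
    exact ⟨by omega, h1, h2'⟩
  · rintro ⟨hl, h1, h2'⟩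
    exact ⟨by omega, rfl, h1, h2'⟩

lemma flatcat_insert_iff (w' : List ℕ) (i n : ℕ) (hn : 2 ≤ n) (h2 : i + 2 ≤ w'.length) :
    w'.insertIdx (i+2) (w'.getD (i+1) 0) ∈ FlatCat n ↔ w' ∈ FlatCat (n-1) := by
  unfold FlatCat
  simp only [Set.mem_setOf_eq]
  rw [length_insert _ _ _ h2, catalan_insert_iff w' i h2, flattened_insert_iff w' i h2]
  constructor
  · rintro ⟨hl, h⟩; exact ⟨by omega, h⟩
  · rintro ⟨hl, h⟩; exact ⟨by omega, h⟩

lemma insert_erase (w : List ℕ) : ∀ (k : ℕ), k < w.length →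
    (w.eraseIdx k).insertIdx k (w.getD k 0) = w := by
  induction w with
  | nil => intro k hk; simp at hk
  | cons x t ih =>
    intro k hk
    cases k with
    | zero => simp [List.eraseIdx, List.insertIdx]
    | succ k =>
      simp only [List.eraseIdx_cons_succ, List.getD_cons_succ, List.insertIdx_succ_cons]
      rw [ih k (by simpa using hk)]

lemma cat_getD_le (w : List ℕ) (hc : IsCatalan w) : ∀ j, w.getD j 0 ≤ j + 1 := by
  intro j
  induction j with
  | zero => rw [hc.2.1]
  | succ j ih =>
    by_cases h : j + 1 < w.length
    · have := (hc.2.2 j h).2; omega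
    · rw [List.getD_eq_default _ _ (by omega)]; omega

lemma flatcat_finite (n : ℕ) : (FlatCat n).Finite := by
  apply Set.Finite.subset
    (Set.Finite.image (List.map (Fin.val : Fin (n+1) → ℕ))
      (List.finite_length_eq (Fin (n+1)) n))
  intro w hw
  obtain ⟨hlen, hc, -⟩ := hw
  have hb : ∀ x ∈ w, x < n + 1 := by
    intro x hx
    obtain ⟨j, hj, rfl⟩ := List.mem_iff_getElem.1 hx
    have := cat_getD_le w hc j
    rw [List.getD_eq_getElem _ _ hj] at this
    omega
  refine ⟨w.attach.map (fun p => (⟨p.1, hb p.1 p.2⟩ : Fin (n+1))), ?_, ?_⟩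
  · simp [hlen]
  · rw [List.map_map]
    simpa using List.attach_map_subtype_val w

open Classical in
noncomputable def occFinset (τ w : List ℕ) : Finset ℕ :=
  (Finset.range w.length).filter (fun i => OccAt τ w i)

lemma occ_set_eq (τ w : List ℕ) (hτ : τ ≠ []) :
    {i | OccAt τ w i} = ↑(occFinset τ w) := by
  classical
  ext i
  simp only [Set.mem_setOf_eq, occFinset, Finset.coe_filter, Finset.mem_range]
  constructor
  · intro h
    refine ⟨?_, h⟩
    have h1 := h.1
    have h2 : 1 ≤ τ.length := List.length_pos_iff.2 hτ
    omega
  · exact fun h => h.2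

lemma mem_occFinset (τ w : List ℕ) (hτ : τ ≠ []) (i : ℕ) :
    i ∈ occFinset τ w ↔ OccAt τ w i := by
  have := occ_set_eq τ w hτ
  constructor
  · intro h
    have : (i : ℕ) ∈ ({i | OccAt τ w i} : Set ℕ) := by rw [this]; exact_mod_cast h
    exact this
  · intro h
    have h2 : (i : ℕ) ∈ ({i | OccAt τ w i} : Set ℕ) := h
    rw [this] at h2
    exact_mod_cast h2

lemma tot_eq_card (n : ℕ) (τ : List ℕ) (hτ : τ ≠ []) :
    tot n τ = (((flatcat_finite n).toFinset).sigma (fun w => occFinset τ w)).card := by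
  rw [Finset.card_sigma]
  unfold tot
  rw [finsum_mem_eq_finite_toFinset_sum _ (flatcat_finite n)]
  apply Finset.sum_congr rfl
  intro w _
  unfold numOcc
  rw [occ_set_eq τ w hτ, Set.ncard_coe_finset]

lemma key (a b n : ℕ) (hn : 2 ≤ n) : tot n [a, b, b] = tot (n-1) [a, b] := by
  rw [tot_eq_card n [a,b,b] (by simp), tot_eq_card (n-1) [a,b] (by simp)]
  apply Finset.card_nbij' (fun p => ⟨p.1.eraseIdx (p.2+2), p.2⟩)
    (fun p => ⟨p.1.insertIdx (p.2+2) (p.1.getD (p.2+1) 0), p.2⟩)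
  · -- hi : maps n-side into (n-1)-side
    rintro ⟨w, i⟩ hp
    rw [Finset.mem_coe, Finset.mem_sigma, Set.Finite.mem_toFinset, mem_occFinset _ _ (by simp)] at hp ⊢
    obtain ⟨hw, hocc⟩ := hp
    obtain ⟨hl3, heq, hr1, hr2⟩ := (occ3_iff a b w i).1 hocc
    set w' := w.eraseIdx (i+2) with hw'
    have hlen : w'.length = w.length - 1 := by
      rw [hw', List.length_eraseIdx]; simp only [if_pos (by omega : i+2 < w.length)]
    have h2' : i + 2 ≤ w'.length := by omega
    have e := insert_erase w (i+2) (by omega)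
    have hval : w'.getD (i+1) 0 = w.getD (i+2) 0 := by
      rw [← heq]
      conv_rhs => rw [← e]
      rw [getD_insert_lt w' i _ h2' (i+1) le_rfl]
    have hw2 : w'.insertIdx (i+2) (w'.getD (i+1) 0) = w := by rw [hval]; exact e
    constructor
    · rw [← flatcat_insert_iff w' i n hn h2', hw2]; exact hw
    · rw [← occ_insert_iff w' i h2' a b, hw2]; exact hocc
  · -- hj : maps (n-1)-side into n-side
    rintro ⟨w', i⟩ hp
    rw [Finset.mem_coe, Finset.mem_sigma, Set.Finite.mem_toFinset, mem_occFinset _ _ (by simp)] at hp ⊢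
    obtain ⟨hw, hocc⟩ := hp
    have h2' : i + 2 ≤ w'.length := by
      have := ((occ2_iff a b w' i).1 hocc).1; omega
    constructor
    · rw [flatcat_insert_iff w' i n hn h2']; exact hw
    · rw [occ_insert_iff w' i h2' a b]; exact hocc
  · -- left inverse
    rintro ⟨w, i⟩ hp
    rw [Finset.mem_coe, Finset.mem_sigma, Set.Finite.mem_toFinset, mem_occFinset _ _ (by simp)] at hp
    obtain ⟨hw, hocc⟩ := hp
    obtain ⟨hl3, heq, hr1, hr2⟩ := (occ3_iff a b w i).1 hocc
    set w' := w.eraseIdx (i+2) with hw'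
    have hlen : w'.length = w.length - 1 := by
      rw [hw', List.length_eraseIdx]; simp only [if_pos (by omega : i+2 < w.length)]
    have h2' : i + 2 ≤ w'.length := by omega
    have e := insert_erase w (i+2) (by omega)
    have hval : w'.getD (i+1) 0 = w.getD (i+2) 0 := by
      rw [← heq]
      conv_rhs => rw [← e]
      rw [getD_insert_lt w' i _ h2' (i+1) le_rfl]
    have hw2 : w'.insertIdx (i+2) (w'.getD (i+1) 0) = w := by rw [hval]; exact e
    simp only
    rw [hw2]
  · -- right inverse
    rintro ⟨w', i⟩ hp
    simp only
    rw [List.eraseIdx_insertIdx_self]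

/-- For every `n ≥ 2`: `tot_n(122) = tot_{n−1}(12)`, `tot_n(211) = tot_{n−1}(21)`
and `tot_n(111) = tot_{n−1}(11)`. -/
theorem tot_length_three_shift (n : ℕ) (hn : 2 ≤ n) :
    tot n [1, 2, 2] = tot (n - 1) [1, 2] ∧
    tot n [2, 1, 1] = tot (n - 1) [2, 1] ∧
    tot n [1, 1, 1] = tot (n - 1) [1, 1] := by
  exact ⟨key 1 2 n hn, key 2 1 n hn, key 1 1 n hn⟩
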